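/- Let (V,E) be a finite temporal graph consisting of a single timestamp (T = 0), let G be the static undirected graph on V with edge set {(u,v) : (u,v,0) ∈ E}, and take α = 1. Then for every S ⊆ V the temporal network inefficiency of the temporal subgraph induced by S equals the static network inefficiency Σ_{u,v ∈ S, u ≠ v, unordered pairs} (1 − 1/d_{G[S]}(u,v)), where d_{G[S]} is the shortest-path distance in the subgraph of G induced by S; consequently, for every query set Q ⊆ V, a set S with Q ⊆ S ⊆ V minimizes the temporal inefficiency of the induced temporal subgraph if and only if it minimizes the static network inefficiency of G[S], i.e. the Minimum Temporal-Inefficiency Subgraph problem specializes to the static Minimum-Inefficiency-Subgraph problem. -/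

import Mathlib

open scoped ENNReal BigOperators

variable {V : Type*}

/-- `p` is a temporal path from `u` to `v` with edges in `E`:
a nonempty list of timestamped edges, consecutive in space and
with nondecreasing timestamps. -/
def IsTempPath (E : Set (V × V × ℕ)) (u v : V) (p : List (V × V × ℕ)) : Prop :=
  p ≠ [] ∧ (∀ e ∈ p, e ∈ E) ∧
    List.Chain' (fun e f : V × V × ℕ => e.2.1 = f.1 ∧ e.2.2 ≤ f.2.2) p ∧
    p.head?.map Prod.fst = some u ∧
    p.getLast?.map (fun e => e.2.1) = some v

/-- Timestamp of the first edge of a temporal path. -/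
def firstTime (p : List (V × V × ℕ)) : ℕ := (p.head?.map (fun e => e.2.2)).getD 0

/-- Timestamp of the last edge of a temporal path. -/
def lastTime (p : List (V × V × ℕ)) : ℕ := (p.getLast?.map (fun e => e.2.2)).getD 0

/-- Cost `L_α(p) = α·(number of edges) + (1-α)·(t_n - t_0)` of a temporal path. -/
noncomputable def costL (α : ℝ) (p : List (V × V × ℕ)) : ℝ :=
  α * p.length + (1 - α) * ((lastTime p : ℝ) - (firstTime p : ℝ))

/-- Shortest-fastest-path distance: infimum of `L_α` over temporal paths from `u` to `v`,
taken in `ℝ≥0∞` (so `∞` if no temporal path exists). -/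
noncomputable def sfpDist (α : ℝ) (E : Set (V × V × ℕ)) (u v : V) : ℝ≥0∞ :=
  sInf {c : ℝ≥0∞ | ∃ p, IsTempPath E u v p ∧ c = ENNReal.ofReal (costL α p)}

/-- Adjacency of the transformed graph `G'` on `V × {0,…,T}`:
waiting edges `(v,t) → (v,t+1)` and snapshot edges `(u,t) → (v,t)` for `(u,v,t) ∈ E`. -/
def TransAdj (E : Set (V × V × ℕ)) (T : ℕ) : V × ℕ → V × ℕ → Prop := fun a b =>
  (a.1 = b.1 ∧ b.2 = a.2 + 1 ∧ b.2 ≤ T) ∨ ((a.1, b.1, a.2) ∈ E ∧ b.2 = a.2)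

/-- Weight of an edge of the transformed graph: `α` for snapshot edges (same timestamp),
`1 - α` for waiting edges. -/
noncomputable def transWeight (α : ℝ) (a b : V × ℕ) : ℝ := if a.2 = b.2 then α else 1 - α

/-- Length `ℓ` of a path in the transformed graph (given as its list of visited vertices):
the sum of the weights of its edges. -/
noncomputable def transLen (α : ℝ) (p : List (V × ℕ)) : ℝ :=
  ((p.zip p.tail).map fun ab => transWeight α ab.1 ab.2).sum

/-- `p` is a directed path in the transformed graph from `x` to `y`,
given as its (nonempty) list of visited vertices. -/
def IsTransPath (E : Set (V × V × ℕ)) (T : ℕ) (x y : V × ℕ) (p : List (V × ℕ)) : Prop :=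
  p ≠ [] ∧ List.Chain' (TransAdj E T) p ∧ p.head? = some x ∧ p.getLast? = some y

/-- Projection of a transformed-graph path to a list of timestamped edges:
delete the waiting edges and read each snapshot edge `((x,t),(y,t))` as `(x,y,t)`. -/
def project (p : List (V × ℕ)) : List (V × V × ℕ) :=
  ((p.zip p.tail).filter fun ab => ab.1.2 == ab.2.2).map fun ab => (ab.1.1, ab.2.1, ab.1.2)

/-- Shortest-path distance in the transformed graph, in `ℝ≥0∞`. -/
noncomputable def transDist (E : Set (V × V × ℕ)) (T : ℕ) (α : ℝ) (x y : V × ℕ) : ℝ≥0∞ :=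
  sInf {c : ℝ≥0∞ | ∃ p, IsTransPath E T x y p ∧ c = ENNReal.ofReal (transLen α p)}

/-- Shortest-path distance (number of edges) in a static graph with adjacency `A`,
in `ℝ≥0∞`: the infimum of the number of edges over (nonempty) walks from `u` to `v`. -/
noncomputable def staticDist (A : V → V → Prop) (u v : V) : ℝ≥0∞ :=
  sInf {c : ℝ≥0∞ | ∃ p : List (V × V), p ≠ [] ∧ (∀ e ∈ p, A e.1 e.2) ∧
    List.Chain' (fun e f : V × V => e.2 = f.1) p ∧
    p.head?.map Prod.fst = some u ∧ p.getLast?.map Prod.snd = some v ∧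
    c = (p.length : ℝ≥0∞)}

/-- Per-pair temporal inefficiency `[(1 - α/d(v,u)) + (1 - α/d(u,v))]/2`,
with the convention `α/∞ = 0` (via `ENNReal.toReal`). -/
noncomputable def perPairIneff (α : ℝ) (E : Set (V × V × ℕ)) (u v : V) : ℝ :=
  ((1 - α / (sfpDist α E v u).toReal) + (1 - α / (sfpDist α E u v).toReal)) / 2

/-- Temporal network inefficiency: the sum of the per-pair inefficiency over unordered
pairs of distinct vertices (the summand is symmetric, so we sum over ordered pairs and
halve). -/
noncomputable def tempIneff (α : ℝ) (E : Set (V × V × ℕ)) [Fintype V] [DecidableEq V] : ℝ :=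
  (∑ q ∈ Finset.univ.offDiag, perPairIneff α E (Prod.fst q) (Prod.snd q)) / 2

/-- Temporal edges of the subgraph induced by `S`. -/
def inducedE (E : Set (V × V × ℕ)) (S : Set V) : Set (V × V × ℕ) :=
  {e ∈ E | e.1 ∈ S ∧ e.2.1 ∈ S}

/-- Temporal network inefficiency of the temporal subgraph induced by a finite set `S`. -/
noncomputable def tempIneffOn (α : ℝ) (E : Set (V × V × ℕ)) [DecidableEq V]
    (S : Finset V) : ℝ :=
  (∑ q ∈ S.offDiag, perPairIneff α (inducedE E ↑S) (Prod.fst q) (Prod.snd q)) / 2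

/-- Static network inefficiency `Σ_{u ≠ v ∈ S} (1 - 1/d_{G[S]}(u,v))` (unordered pairs,
with `1/∞ = 0`) of the subgraph induced by `S` in the static graph with adjacency `A`. -/
noncomputable def staticIneffOn (A : V → V → Prop) [DecidableEq V] (S : Finset V) : ℝ :=
  (∑ q ∈ S.offDiag,
    (1 - 1 / (staticDist (fun x y => A x y ∧ x ∈ S ∧ y ∈ S)
      (Prod.fst q) (Prod.snd q)).toReal)) / 2

lemma sfp_eq_static (E : Set (V × V × ℕ))
    (hT0 : ∀ e ∈ E, e.2.2 = 0) (S : Finset V) (u v : V) :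
    sfpDist 1 (inducedE E ↑S) u v
      = staticDist (fun x y => (x, y, 0) ∈ E ∧ x ∈ S ∧ y ∈ S) u v := by
  unfold sfpDist staticDist
  congr 1
  ext c
  simp only [Set.mem_setOf_eq]
  constructor
  · rintro ⟨p, ⟨hne, hmem, hchain, hhead, hlast⟩, rfl⟩
    refine ⟨p.map (fun e => (e.1, e.2.1)), by simpa using hne, ?_, ?_, ?_, ?_, ?_⟩
    · intro e' he'
      simp only [List.mem_map] at he'
      obtain ⟨e, he, rfl⟩ := he'
      obtain ⟨heE, h1, h2⟩ := hmem e he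
      have ht : e.2.2 = 0 := hT0 e heE
      refine ⟨?_, h1, h2⟩
      have : e = (e.1, e.2.1, 0) := by
        obtain ⟨a, b, t⟩ := e; simp_all
      rwa [this] at heE
    · rw [List.Chain', List.isChain_map]
      exact List.IsChain.imp (fun a b h => h.1) hchain
    · rw [List.head?_map, Option.map_map]
      exact hhead
    · rw [List.getLast?_map, Option.map_map]
      exact hlast
    · have : costL 1 p = (p.length : ℝ) := by
        simp [costL]
      rw [this, List.length_map, ENNReal.ofReal_natCast]
  · rintro ⟨q, hne, hmem, hchain, hhead, hlast, rfl⟩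
    refine ⟨q.map (fun e => (e.1, e.2, 0)), ⟨by simpa using hne, ?_, ?_, ?_, ?_⟩, ?_⟩
    · intro e he
      simp only [List.mem_map] at he
      obtain ⟨e', he', rfl⟩ := he
      obtain ⟨h1, h2, h3⟩ := hmem e' he'
      exact ⟨h1, h2, h3⟩
    · rw [List.Chain', List.isChain_map]
      exact List.IsChain.imp (fun a b h => ⟨h, le_refl 0⟩) hchain
    · rw [List.head?_map, Option.map_map]
      exact hhead
    · rw [List.getLast?_map, Option.map_map]
      exact hlast
    · have : costL 1 (q.map (fun e : V × V => (e.1, e.2, 0))) =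
          ((q.map (fun e : V × V => (e.1, e.2, 0))).length : ℝ) := by
        simp [costL]
      rw [this, List.length_map, ENNReal.ofReal_natCast]

/-- on a finite temporal graph with a single timestamp (`T = 0`) and for
`α = 1`, the temporal inefficiency of every induced subgraph equals the static network
inefficiency of the corresponding induced static subgraph; consequently the Minimum
Temporal-Inefficiency Subgraph problem specializes to the static
Minimum-Inefficiency-Subgraph problem. -/
theorem stmt11 [Fintype V] [DecidableEq V] (E : Set (V × V × ℕ))
    (hsym : ∀ u v t, (u, v, t) ∈ E ↔ (v, u, t) ∈ E)
    (hT0 : ∀ e ∈ E, e.2.2 = 0) :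
    (∀ S : Finset V,
      tempIneffOn 1 E S = staticIneffOn (fun x y => (x, y, 0) ∈ E) S) ∧
    (∀ Q S : Finset V, Q ⊆ S →
      ((∀ S' : Finset V, Q ⊆ S' → tempIneffOn 1 E S ≤ tempIneffOn 1 E S') ↔
       (∀ S' : Finset V, Q ⊆ S' →
          staticIneffOn (fun x y => (x, y, 0) ∈ E) S ≤
            staticIneffOn (fun x y => (x, y, 0) ∈ E) S'))) := by
  have key : ∀ S : Finset V,
      tempIneffOn 1 E S = staticIneffOn (fun x y => (x, y, 0) ∈ E) S := by
    intro S
    unfold tempIneffOn staticIneffOn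
    congr 1
    have hpp : ∀ u v : V, perPairIneff 1 (inducedE E ↑S) u v =
        ((1 - 1 / (staticDist (fun x y => (x, y, 0) ∈ E ∧ x ∈ S ∧ y ∈ S) v u).toReal)
          + (1 - 1 / (staticDist (fun x y => (x, y, 0) ∈ E ∧ x ∈ S ∧ y ∈ S) u v).toReal))
          / 2 := by
      intro u v
      unfold perPairIneff
      rw [sfp_eq_static E hT0, sfp_eq_static E hT0]
    calc ∑ q ∈ S.offDiag, perPairIneff 1 (inducedE E ↑S) q.1 q.2
        = ∑ q ∈ S.offDiag,
          ((1 - 1 / (staticDist (fun x y => (x, y, 0) ∈ E ∧ x ∈ S ∧ y ∈ S) q.2 q.1).toReal)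
            + (1 - 1 / (staticDist (fun x y => (x, y, 0) ∈ E ∧ x ∈ S ∧ y ∈ S)
                q.1 q.2).toReal)) / 2 := by
          exact Finset.sum_congr rfl fun q _ => hpp q.1 q.2
      _ = ∑ q ∈ S.offDiag,
          (1 - 1 / (staticDist (fun x y => (x, y, 0) ∈ E ∧ x ∈ S ∧ y ∈ S)
            q.1 q.2).toReal) := by
          have hswap : ∑ q ∈ S.offDiag,
              (1 - 1 / (staticDist (fun x y => (x, y, 0) ∈ E ∧ x ∈ S ∧ y ∈ S)
                q.2 q.1).toReal)
              = ∑ q ∈ S.offDiag,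
              (1 - 1 / (staticDist (fun x y => (x, y, 0) ∈ E ∧ x ∈ S ∧ y ∈ S)
                q.1 q.2).toReal) := by
            apply Finset.sum_nbij' (fun q => Prod.swap q) (fun q => Prod.swap q)
            · intro q hq
              simp only [Finset.mem_offDiag] at hq ⊢
              exact ⟨hq.2.1, hq.1, fun h => hq.2.2 h.symm⟩
            · intro q hq
              simp only [Finset.mem_offDiag] at hq ⊢
              exact ⟨hq.2.1, hq.1, fun h => hq.2.2 h.symm⟩
            · intro q _; simp
            · intro q _; simp
            · intro q _; simp
          rw [← Finset.sum_div, Finset.sum_add_distrib, hswap, add_self_div_two]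
  refine ⟨key, fun Q S _ => ?_⟩
  simp only [key]
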